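/- For every nonzero ξ ∈ ℝ^d there exists a unique point x ∈ ∂D such that ∇F(x)/|∇F(x)| = ξ/|ξ|, i.e., the outward unit normal to ∂D at x equals ξ/|ξ|. -/

import Mathlib

open MeasureTheory Finset Real Filter Pointwise

open scoped InnerProductSpace Topology

noncomputable section

/-- The block of (0-indexed) coordinates `l` with `dp p ≤ l < dp (p+1)`. -/
def block (dd : ℕ) (dp : ℕ → ℕ) (p : ℕ) : Finset (Fin dd) :=
  Finset.univ.filter fun l => dp p ≤ (l : ℕ) ∧ (l : ℕ) < dp (p + 1)

/-- The defining function of the domain `D`. -/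
def Ffun (dd nn : ℕ) (dp m : ℕ → ℕ) (ω : Fin dd → ℕ)
    (x : EuclideanSpace ℝ (Fin dd)) : ℝ :=
  ∑ p ∈ Finset.range nn, (∑ l ∈ block dd dp p, x l ^ ω l) ^ m p

/-- The domain `D`. -/
def Dset (dd nn : ℕ) (dp m : ℕ → ℕ) (ω : Fin dd → ℕ) :
    Set (EuclideanSpace ℝ (Fin dd)) :=
  {x | Ffun dd nn dp m ω x ≤ 1}

/-- The exponents `m_{j,l}`. -/
def mjl (dd : ℕ) (m : ℕ → ℕ) (pIdx : Fin dd → ℕ) (j l : Fin dd) : ℕ :=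
  if pIdx j = pIdx l then 1 else m (pIdx l)

/-- The Fourier transform of the indicator function of a set. -/
def ftInd (dd : ℕ) (D : Set (EuclideanSpace ℝ (Fin dd)))
    (ξ : EuclideanSpace ℝ (Fin dd)) : ℂ :=
  ∫ x in D, Complex.exp (-2 * Real.pi * Complex.I * ((inner ℝ x ξ : ℝ) : ℂ))

/-- The Fourier transform of a (real-valued) function. -/
def ftFun (dd : ℕ) (f : EuclideanSpace ℝ (Fin dd) → ℝ)
    (ξ : EuclideanSpace ℝ (Fin dd)) : ℂ :=
  ∫ x, (f x : ℂ) * Complex.exp (-2 * Real.pi * Complex.I * ((inner ℝ x ξ : ℝ) : ℂ))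

/-- The number of lattice points in the dilate `t • D`. -/
def latCount (dd : ℕ) (D : Set (EuclideanSpace ℝ (Fin dd))) (t : ℝ) : ℕ :=
  Set.ncard {k : Fin dd → ℤ | (WithLp.toLp 2 (fun i => (k i : ℝ)) : EuclideanSpace ℝ (Fin dd)) ∈ t • D}


section auxgrad

open scoped InnerProductSpace Topology

variable {E : Type*} [NormedAddCommGroup E] [InnerProductSpace ℝ E] [CompleteSpace E]

lemma inner_gradient_eq (f : E → ℝ) (x v : E) :
    ⟪gradient f x, v⟫_ℝ = fderiv ℝ f x v :=
  InnerProductSpace.toDual_symm_apply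

lemma line_hasDerivAt (f : E → ℝ) (hf : Differentiable ℝ f) (x v : E) :
    HasDerivAt (fun t : ℝ => f (x + t • v)) ⟪gradient f x, v⟫_ℝ 0 := by
  have h1 : HasDerivAt (fun t : ℝ => x + t • v) v 0 := by
    simpa using ((hasDerivAt_id (0 : ℝ)).smul_const v).const_add x
  have h2 : HasFDerivAt f (fderiv ℝ f x) x := (hf x).hasFDerivAt
  have h0 : x = x + (0 : ℝ) • v := by simp
  rw [h0] at h2
  have h3 := h2.comp_hasDerivAt 0 h1
  rw [inner_gradient_eq]
  simpa [Function.comp_def] using h3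

lemma grad_ineq (f : E → ℝ) (hconv : ConvexOn ℝ Set.univ f) (hf : Differentiable ℝ f)
    (x y : E) : f x + ⟪gradient f x, y - x⟫_ℝ ≤ f y := by
  have hder := line_hasDerivAt f hf x (y - x)
  have hφ : ConvexOn ℝ Set.univ (fun t : ℝ => f (x + t • (y - x))) := by
    have h := hconv.comp_affineMap (AffineMap.lineMap x y)
    have he : (fun t : ℝ => f (x + t • (y - x))) = f ∘ (AffineMap.lineMap x y) := by
      funext t
      simp [AffineMap.lineMap_apply, add_comm]
    rw [he]
    simpa using h
  have hs := hφ.le_slope_of_hasDerivAt (Set.mem_univ (0 : ℝ)) (Set.mem_univ 1) one_pos hder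
  have h1 : x + (1 : ℝ) • (y - x) = y := by simp
  have h0 : x + (0 : ℝ) • (y - x) = x := by simp
  rw [slope_def_field, h1, h0, sub_zero, div_one] at hs
  linarith

lemma exists_pos_lt {ψ : ℝ → ℝ} {c : ℝ} (hd : HasDerivAt ψ c 0) (hc : c < 0) :
    ∃ t : ℝ, 0 < t ∧ ψ t < ψ 0 := by
  have hslope := hasDerivAt_iff_tendsto_slope.1 hd
  have hev : ∀ᶠ t in 𝓝[>] (0 : ℝ), slope ψ 0 t < 0 :=
    (hslope.mono_left (nhdsWithin_mono _ fun t ht => ne_of_gt ht)).eventually_lt_const hc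
  obtain ⟨t, hts, ht⟩ := (hev.and self_mem_nhdsWithin).exists
  refine ⟨t, ht, ?_⟩
  rw [slope_def_field, sub_zero] at hts
  rcases div_neg_iff.1 hts with ⟨h1, h2⟩ | ⟨h1, h2⟩
  · exact absurd ht (not_lt.2 h2.le)
  · linarith

lemma inner_self_pos' {x : E} (hx : x ≠ 0) : 0 < ⟪x, x⟫_ℝ := by
  rw [real_inner_self_eq_norm_sq]
  exact pow_pos (norm_pos_iff.2 hx) 2

end auxgrad

section ffun

variable {dd nn : ℕ} {dp m : ℕ → ℕ} {ω : Fin dd → ℕ} {pIdx : Fin dd → ℕ}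

lemma block_sum_nonneg (hω : ∀ l, Even (ω l) ∧ 0 < ω l)
    (x : EuclideanSpace ℝ (Fin dd)) (p : ℕ) :
    0 ≤ ∑ l ∈ block dd dp p, x l ^ ω l :=
  Finset.sum_nonneg fun l _ => (hω l).1.pow_nonneg _

lemma Gkey (hω : ∀ l, Even (ω l) ∧ 0 < ω l) (p : ℕ) (hmp : m p ≠ 0)
    (x y : EuclideanSpace ℝ (Fin dd)) {a b : ℝ} (ha : 0 ≤ a) (hb : 0 ≤ b) (hab : a + b = 1) :
    (∑ l ∈ block dd dp p, (a • x + b • y) l ^ ω l) ^ m p ≤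
      a * (∑ l ∈ block dd dp p, x l ^ ω l) ^ m p +
        b * (∑ l ∈ block dd dp p, y l ^ ω l) ^ m p := by
  have hS : ∑ l ∈ block dd dp p, (a • x + b • y) l ^ ω l ≤
      a * (∑ l ∈ block dd dp p, x l ^ ω l) + b * (∑ l ∈ block dd dp p, y l ^ ω l) := by
    rw [Finset.mul_sum, Finset.mul_sum, ← Finset.sum_add_distrib]
    refine Finset.sum_le_sum fun l _ => ?_
    have h := (hω l).1.convexOn_pow.2 (Set.mem_univ (x l)) (Set.mem_univ (y l)) ha hb hab
    simpa [smul_eq_mul] using h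
  have h0 : 0 ≤ ∑ l ∈ block dd dp p, (a • x + b • y) l ^ ω l := block_sum_nonneg hω _ p
  have hx0 : 0 ≤ ∑ l ∈ block dd dp p, x l ^ ω l := block_sum_nonneg hω x p
  have hy0 : 0 ≤ ∑ l ∈ block dd dp p, y l ^ ω l := block_sum_nonneg hω y p
  calc (∑ l ∈ block dd dp p, (a • x + b • y) l ^ ω l) ^ m p
      ≤ (a * (∑ l ∈ block dd dp p, x l ^ ω l) + b * (∑ l ∈ block dd dp p, y l ^ ω l)) ^ m p :=
        pow_le_pow_left₀ h0 hS _
    _ ≤ a * (∑ l ∈ block dd dp p, x l ^ ω l) ^ m p +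
          b * (∑ l ∈ block dd dp p, y l ^ ω l) ^ m p := by
        have h := (convexOn_pow (m p)).2 (Set.mem_Ici.2 hx0) (Set.mem_Ici.2 hy0) ha hb hab
        simpa [smul_eq_mul] using h

lemma GkeyStrict (hω : ∀ l, Even (ω l) ∧ 0 < ω l) (p : ℕ) (hmp : m p ≠ 0)
    (x y : EuclideanSpace ℝ (Fin dd)) {a b : ℝ} (ha : 0 < a) (hb : 0 < b) (hab : a + b = 1)
    (l0 : Fin dd) (hl0 : l0 ∈ block dd dp p) (hne : x l0 ≠ y l0) :
    (∑ l ∈ block dd dp p, (a • x + b • y) l ^ ω l) ^ m p <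
      a * (∑ l ∈ block dd dp p, x l ^ ω l) ^ m p +
        b * (∑ l ∈ block dd dp p, y l ^ ω l) ^ m p := by
  have hS : ∑ l ∈ block dd dp p, (a • x + b • y) l ^ ω l <
      a * (∑ l ∈ block dd dp p, x l ^ ω l) + b * (∑ l ∈ block dd dp p, y l ^ ω l) := by
    rw [Finset.mul_sum, Finset.mul_sum, ← Finset.sum_add_distrib]
    refine Finset.sum_lt_sum (fun l _ => ?_) ⟨l0, hl0, ?_⟩
    · have h := (hω l).1.convexOn_pow.2 (Set.mem_univ (x l)) (Set.mem_univ (y l)) ha.le hb.le hab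
      simpa [smul_eq_mul] using h
    · have h := ((hω l0).1.strictConvexOn_pow (hω l0).2.ne').2 (Set.mem_univ (x l0))
        (Set.mem_univ (y l0)) hne ha hb hab
      simpa [smul_eq_mul] using h
  have h0 : 0 ≤ ∑ l ∈ block dd dp p, (a • x + b • y) l ^ ω l := block_sum_nonneg hω _ p
  have hx0 : 0 ≤ ∑ l ∈ block dd dp p, x l ^ ω l := block_sum_nonneg hω x p
  have hy0 : 0 ≤ ∑ l ∈ block dd dp p, y l ^ ω l := block_sum_nonneg hω y p
  calc (∑ l ∈ block dd dp p, (a • x + b • y) l ^ ω l) ^ m p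
      < (a * (∑ l ∈ block dd dp p, x l ^ ω l) + b * (∑ l ∈ block dd dp p, y l ^ ω l)) ^ m p :=
        pow_lt_pow_left₀ hS h0 hmp
    _ ≤ a * (∑ l ∈ block dd dp p, x l ^ ω l) ^ m p +
          b * (∑ l ∈ block dd dp p, y l ^ ω l) ^ m p := by
        have h := (convexOn_pow (m p)).2 (Set.mem_Ici.2 hx0) (Set.mem_Ici.2 hy0) ha.le hb.le hab
        simpa [smul_eq_mul] using h

lemma Fconvex (hω : ∀ l, Even (ω l) ∧ 0 < ω l) (hm : ∀ p < nn, 1 ≤ m p) :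
    ConvexOn ℝ Set.univ (Ffun dd nn dp m ω) := by
  refine ⟨convex_univ, fun x _ y _ a b ha hb hab => ?_⟩
  show Ffun dd nn dp m ω (a • x + b • y) ≤ a * Ffun dd nn dp m ω x + b * Ffun dd nn dp m ω y
  unfold Ffun
  rw [Finset.mul_sum, Finset.mul_sum, ← Finset.sum_add_distrib]
  exact Finset.sum_le_sum fun p hp' =>
    Gkey hω p (Nat.one_le_iff_ne_zero.1 (hm p (Finset.mem_range.1 hp'))) x y ha hb hab

lemma Fstrict (hω : ∀ l, Even (ω l) ∧ 0 < ω l) (hm : ∀ p < nn, 1 ≤ m p)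
    (hp : ∀ i : Fin dd, pIdx i < nn ∧ dp (pIdx i) ≤ (i : ℕ) ∧ (i : ℕ) < dp (pIdx i + 1))
    {x y : EuclideanSpace ℝ (Fin dd)} (hxy : x ≠ y) :
    Ffun dd nn dp m ω ((1/2 : ℝ) • x + (1/2 : ℝ) • y) <
      1/2 * Ffun dd nn dp m ω x + 1/2 * Ffun dd nn dp m ω y := by
  obtain ⟨l0, hl0⟩ : ∃ l, x l ≠ y l := by
    by_contra h
    push_neg at h
    exact hxy (PiLp.ext h)
  have hl0mem : l0 ∈ block dd dp (pIdx l0) :=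
    Finset.mem_filter.2 ⟨Finset.mem_univ _, (hp l0).2⟩
  unfold Ffun
  rw [Finset.mul_sum, Finset.mul_sum, ← Finset.sum_add_distrib]
  refine Finset.sum_lt_sum (fun p hp' => Gkey hω p
      (Nat.one_le_iff_ne_zero.1 (hm p (Finset.mem_range.1 hp'))) x y (by norm_num) (by norm_num)
      (by norm_num)) ⟨pIdx l0, Finset.mem_range.2 (hp l0).1, ?_⟩
  exact GkeyStrict hω (pIdx l0)
    (Nat.one_le_iff_ne_zero.1 (hm _ (hp l0).1)) x y (by norm_num) (by norm_num) (by norm_num)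
    l0 hl0mem hl0

lemma F0 (hω : ∀ l, Even (ω l) ∧ 0 < ω l) (hm : ∀ p < nn, 1 ≤ m p) :
    Ffun dd nn dp m ω 0 = 0 := by
  unfold Ffun
  refine Finset.sum_eq_zero fun p hp' => ?_
  have h1 : ∀ l ∈ block dd dp p, (0 : EuclideanSpace ℝ (Fin dd)) l ^ ω l = 0 := fun l _ => by
    simp [zero_pow (hω l).2.ne']
  rw [Finset.sum_eq_zero h1, zero_pow (Nat.one_le_iff_ne_zero.1 (hm p (Finset.mem_range.1 hp')))]

lemma Fdiff : Differentiable ℝ (Ffun dd nn dp m ω) := by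
  unfold Ffun
  apply Differentiable.fun_sum
  intro p _
  apply Differentiable.fun_pow
  apply Differentiable.fun_sum
  intro l _
  exact ((EuclideanSpace.proj l : EuclideanSpace ℝ (Fin dd) →L[ℝ] ℝ).differentiable).fun_pow _

lemma coord_bound (hω : ∀ l, Even (ω l) ∧ 0 < ω l) (hm : ∀ p < nn, 1 ≤ m p)
    (hp : ∀ i : Fin dd, pIdx i < nn ∧ dp (pIdx i) ≤ (i : ℕ) ∧ (i : ℕ) < dp (pIdx i + 1))
    (x : EuclideanSpace ℝ (Fin dd)) (hx : Ffun dd nn dp m ω x ≤ 1) (l : Fin dd) :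
    |x l| ≤ 1 := by
  have hlmem : l ∈ block dd dp (pIdx l) := Finset.mem_filter.2 ⟨Finset.mem_univ _, (hp l).2⟩
  have h1 : (∑ i ∈ block dd dp (pIdx l), x i ^ ω i) ^ m (pIdx l) ≤ Ffun dd nn dp m ω x := by
    unfold Ffun
    exact Finset.single_le_sum (fun p _ => pow_nonneg (block_sum_nonneg hω x p) _)
      (Finset.mem_range.2 (hp l).1)
  have hS0 : 0 ≤ ∑ i ∈ block dd dp (pIdx l), x i ^ ω i := block_sum_nonneg hω x _
  have hS1 : ∑ i ∈ block dd dp (pIdx l), x i ^ ω i ≤ 1 :=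
    (pow_le_one_iff_of_nonneg hS0
      (Nat.one_le_iff_ne_zero.1 (hm _ (hp l).1))).1 (h1.trans hx)
  have h2 : x l ^ ω l ≤ 1 :=
    le_trans (Finset.single_le_sum (fun i _ => (hω i).1.pow_nonneg (x i)) hlmem) hS1
  have h3 : |x l| ^ ω l ≤ 1 := by
    rwa [← abs_pow, abs_of_nonneg ((hω l).1.pow_nonneg (x l))]
  exact (pow_le_one_iff_of_nonneg (abs_nonneg _) (hω l).2.ne').1 h3

lemma Dcompact (hω : ∀ l, Even (ω l) ∧ 0 < ω l) (hm : ∀ p < nn, 1 ≤ m p)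
    (hp : ∀ i : Fin dd, pIdx i < nn ∧ dp (pIdx i) ≤ (i : ℕ) ∧ (i : ℕ) < dp (pIdx i + 1)) :
    IsCompact {x : EuclideanSpace ℝ (Fin dd) | Ffun dd nn dp m ω x ≤ 1} := by
  apply Metric.isCompact_of_isClosed_isBounded
  · exact isClosed_le (Fdiff.continuous) continuous_const
  · apply (Metric.isBounded_closedBall (x := (0 : EuclideanSpace ℝ (Fin dd)))
      (r := Real.sqrt dd)).subset
    intro x hx
    rw [Metric.mem_closedBall, dist_zero_right]
    rw [EuclideanSpace.norm_eq]
    apply Real.sqrt_le_sqrt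
    calc ∑ i, ‖x i‖ ^ 2 ≤ ∑ _i : Fin dd, (1 : ℝ) := by
          refine Finset.sum_le_sum fun i _ => ?_
          have h := coord_bound hω hm hp x hx i
          rw [Real.norm_eq_abs]
          nlinarith [abs_nonneg (x i)]
      _ = dd := by simp

end ffun

set_option maxHeartbeats 1000000

theorem gauss_map_bijective
    (dd nn : ℕ) (dp m : ℕ → ℕ) (ω : Fin dd → ℕ) (pIdx : Fin dd → ℕ)
    (hd : 3 ≤ dd) (hn : 1 ≤ nn) (hdp0 : dp 0 = 0) (hdpn : dp nn = dd)
    (hmono : ∀ p < nn, dp p < dp (p + 1)) (hm : ∀ p < nn, 1 ≤ m p)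
    (hω : ∀ l, Even (ω l) ∧ 0 < ω l)
    (hp : ∀ i : Fin dd, pIdx i < nn ∧ dp (pIdx i) ≤ (i : ℕ) ∧ (i : ℕ) < dp (pIdx i + 1))
    :
    ∀ ξ : EuclideanSpace ℝ (Fin dd), ξ ≠ 0 →
      ∃! x : EuclideanSpace ℝ (Fin dd), Ffun dd nn dp m ω x = 1 ∧
        ‖gradient (Ffun dd nn dp m ω) x‖⁻¹ • gradient (Ffun dd nn dp m ω) x =
          ‖ξ‖⁻¹ • ξ := by
  intro ξ hξ
  have hconv := Fconvex (dp := dp) hω hm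
  have hdiff : Differentiable ℝ (Ffun dd nn dp m ω) := Fdiff
  have hF0 := F0 (dp := dp) hω hm
  set F : EuclideanSpace ℝ (Fin dd) → ℝ := Ffun dd nn dp m ω with hFdef
  -- positivity of the gradient pairing on the boundary
  have hgrad1 : ∀ z : EuclideanSpace ℝ (Fin dd), F z = 1 →
      1 ≤ ⟪gradient F z, z⟫_ℝ := by
    intro z hz
    have h := grad_ineq F hconv hdiff z 0
    rw [hF0, hz, zero_sub, inner_neg_right] at h
    linarith
  have hgne : ∀ z : EuclideanSpace ℝ (Fin dd), F z = 1 → gradient F z ≠ 0 := by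
    intro z hz h
    have := hgrad1 z hz
    rw [h, inner_zero_left] at this
    linarith
  -- uniqueness
  have huniq : ∀ x y : EuclideanSpace ℝ (Fin dd),
      (F x = 1 ∧ ‖gradient F x‖⁻¹ • gradient F x = ‖ξ‖⁻¹ • ξ) →
      (F y = 1 ∧ ‖gradient F y‖⁻¹ • gradient F y = ‖ξ‖⁻¹ • ξ) → x = y := by
    rintro x y ⟨hx1, hx2⟩ ⟨hy1, hy2⟩
    by_contra hne
    have hgx0 := hgne x hx1
    have hgy0 := hgne y hy1
    have hxa : gradient F x = (‖gradient F x‖ * ‖ξ‖⁻¹) • ξ := by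
      rw [← smul_smul, ← hx2, smul_smul, mul_inv_cancel₀ (norm_ne_zero_iff.2 hgx0), one_smul]
    have hya : gradient F y = (‖gradient F y‖ * ‖ξ‖⁻¹) • ξ := by
      rw [← smul_smul, ← hy2, smul_smul, mul_inv_cancel₀ (norm_ne_zero_iff.2 hgy0), one_smul]
    have ha : 0 < ‖gradient F x‖ * ‖ξ‖⁻¹ :=
      mul_pos (norm_pos_iff.2 hgx0) (inv_pos.2 (norm_pos_iff.2 hξ))
    have hb : 0 < ‖gradient F y‖ * ‖ξ‖⁻¹ :=
      mul_pos (norm_pos_iff.2 hgy0) (inv_pos.2 (norm_pos_iff.2 hξ))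
    have h1 := grad_ineq F hconv hdiff x y
    have h2 := grad_ineq F hconv hdiff y x
    rw [hx1, hy1, hxa] at h1
    rw [hx1, hy1, hya] at h2
    rw [real_inner_smul_left] at h1 h2
    have h1' : ⟪ξ, y - x⟫_ℝ ≤ 0 := by nlinarith
    have h2' : ⟪ξ, x - y⟫_ℝ ≤ 0 := by nlinarith
    have hzero : ⟪ξ, y - x⟫_ℝ = 0 := by
      rw [inner_sub_right] at h1' h2' ⊢
      linarith
    have hmid := Fstrict (dp := dp) hω hm hp hne
    rw [← hFdef, hx1, hy1] at hmid
    have hineq := grad_ineq F hconv hdiff x ((1/2 : ℝ) • x + (1/2 : ℝ) • y)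
    have hmidx : ((1/2 : ℝ) • x + (1/2 : ℝ) • y) - x = (1/2 : ℝ) • (y - x) := by
      module
    rw [hx1, hmidx, hxa, real_inner_smul_left, real_inner_smul_right, hzero] at hineq
    norm_num at hineq
    linarith
  -- existence: maximize ⟨·, ξ⟩ on D
  have hcont : Continuous fun y : EuclideanSpace ℝ (Fin dd) => ⟪y, ξ⟫_ℝ :=
    continuous_id.inner continuous_const
  obtain ⟨x, hxD, hxmax⟩ := (Dcompact hω hm hp).exists_isMaxOn
    ⟨0, by
      show Ffun dd nn dp m ω 0 ≤ 1
      rw [show Ffun dd nn dp m ω 0 = 0 from hF0]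
      norm_num⟩ hcont.continuousOn
  have hxF : F x = 1 := by
    have hxD' : F x ≤ 1 := hxD
    rcases lt_or_eq_of_le hxD' with hlt | heq
    · exfalso
      have hcont2 : ContinuousAt (fun t : ℝ => F (x + t • ξ)) 0 :=
        (hdiff.continuous.comp
          (continuous_const.add (continuous_id.smul continuous_const))).continuousAt
      have h0' : F (x + (0 : ℝ) • ξ) < 1 := by simpa using hlt
      have hev : ∀ᶠ t in 𝓝 (0 : ℝ), F (x + t • ξ) < 1 := hcont2.eventually_lt_const h0'
      obtain ⟨t, h1t, h2t⟩ :=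
        ((hev.filter_mono (nhdsWithin_le_nhds (s := Set.Ioi (0:ℝ)))).and
          self_mem_nhdsWithin).exists
      have hmem : x + t • ξ ∈ {z : EuclideanSpace ℝ (Fin dd) | F z ≤ 1} := le_of_lt h1t
      have hle : ⟪x + t • ξ, ξ⟫_ℝ ≤ ⟪x, ξ⟫_ℝ := hxmax hmem
      rw [inner_add_left, real_inner_smul_left] at hle
      have hpos : 0 < ⟪ξ, ξ⟫_ℝ := inner_self_pos' hξ
      have ht : (0 : ℝ) < t := h2t
      nlinarith
    · exact heq
  -- the rule: directions decreasing F cannot increase ⟨·, ξ⟩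
  have hR : ∀ v : EuclideanSpace ℝ (Fin dd), ⟪gradient F x, v⟫_ℝ < 0 → ⟪ξ, v⟫_ℝ ≤ 0 := by
    intro v hv
    by_contra hpos
    push_neg at hpos
    obtain ⟨t, ht, hlt⟩ := exists_pos_lt (line_hasDerivAt F hdiff x v) hv
    have h0' : F (x + (0 : ℝ) • v) = 1 := by simpa using hxF
    have hmem : x + t • v ∈ {z : EuclideanSpace ℝ (Fin dd) | F z ≤ 1} := by
      have : F (x + t • v) < 1 := by rw [← h0']; exact hlt
      exact le_of_lt this
    have hle : ⟪x + t • v, ξ⟫_ℝ ≤ ⟪x, ξ⟫_ℝ := hxmax hmem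
    rw [inner_add_left, real_inner_smul_left] at hle
    have hcomm : ⟪ξ, v⟫_ℝ = ⟪v, ξ⟫_ℝ := real_inner_comm _ _
    nlinarith
  have hgx0 : gradient F x ≠ 0 := hgne x hxF
  have hgg : 0 < ⟪gradient F x, gradient F x⟫_ℝ := inner_self_pos' hgx0
  -- orthogonal directions to the gradient are orthogonal to ξ
  have hperp : ∀ w : EuclideanSpace ℝ (Fin dd),
      ⟪gradient F x, w⟫_ℝ = 0 → ⟪ξ, w⟫_ℝ ≤ 0 := by
    intro w hw
    by_contra hpos
    push_neg at hpos
    set g := gradient F x with hg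
    set ε := ⟪ξ, w⟫_ℝ / (|⟪ξ, g⟫_ℝ| + 1) with hε
    have hεpos : 0 < ε := div_pos hpos (by positivity)
    have h1 : ⟪g, w - ε • g⟫_ℝ < 0 := by
      rw [inner_sub_right, real_inner_smul_right, hw]
      nlinarith
    have h2 := hR _ h1
    rw [inner_sub_right, real_inner_smul_right] at h2
    have habs : ⟪ξ, g⟫_ℝ ≤ |⟪ξ, g⟫_ℝ| := le_abs_self _
    have hmul : ε * ⟪ξ, g⟫_ℝ ≤ ε * |⟪ξ, g⟫_ℝ| := mul_le_mul_of_nonneg_left habs hεpos.le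
    have hεA : ε * (|⟪ξ, g⟫_ℝ| + 1) = ⟪ξ, w⟫_ℝ := div_mul_cancel₀ _ (by positivity)
    nlinarith
  set c := ⟪gradient F x, ξ⟫_ℝ / ⟪gradient F x, gradient F x⟫_ℝ with hc
  have hw0 : ⟪gradient F x, ξ - c • gradient F x⟫_ℝ = 0 := by
    rw [inner_sub_right, real_inner_smul_right, hc,
      div_mul_cancel₀ _ (ne_of_gt hgg), sub_self]
  have hw0' : ⟪gradient F x, -(ξ - c • gradient F x)⟫_ℝ = 0 := by
    rw [inner_neg_right, hw0, neg_zero]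
  have hξw1 := hperp _ hw0
  have hξw2 := hperp _ hw0'
  rw [inner_neg_right] at hξw2
  have hξw : ⟪ξ, ξ - c • gradient F x⟫_ℝ = 0 := le_antisymm hξw1 (by linarith)
  have hww : ⟪ξ - c • gradient F x, ξ - c • gradient F x⟫_ℝ = 0 := by
    rw [inner_sub_left, real_inner_smul_left, hw0, hξw]
    ring
  have hfin : ξ - c • gradient F x = 0 := inner_self_eq_zero.1 hww
  have hxig : ξ = c • gradient F x := by rwa [sub_eq_zero] at hfin
  have hc0 : c ≠ 0 := by
    intro h
    apply hξ
    rw [hxig, h, zero_smul]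
  have hcpos : 0 < c := by
    rcases hc0.lt_or_gt with hneg | hpos
    · exfalso
      have hgξ : ⟪gradient F x, ξ⟫_ℝ < 0 := by
        rw [hxig, real_inner_smul_right]
        exact mul_neg_of_neg_of_pos hneg hgg
      have h3 := hR ξ hgξ
      have h4 : 0 < ⟪ξ, ξ⟫_ℝ := inner_self_pos' hξ
      linarith
    · exact hpos
  have hg_eq : gradient F x = c⁻¹ • ξ := by
    rw [hxig, smul_smul, inv_mul_cancel₀ hc0, one_smul]
  have hnorm : ‖gradient F x‖⁻¹ • gradient F x = ‖ξ‖⁻¹ • ξ := by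
    rw [hg_eq, norm_smul, Real.norm_eq_abs, abs_of_pos (inv_pos.2 hcpos), smul_smul]
    congr 1
    rw [mul_inv, inv_inv, mul_comm c (‖ξ‖⁻¹), mul_assoc, mul_inv_cancel₀ hc0, mul_one]
  exact ⟨x, ⟨hxF, hnorm⟩, fun y hy => huniq y x hy ⟨hxF, hnorm⟩⟩
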